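/- 𝒮 ∘ 𝒮 = id_{H1} if and only if both of the following hold: a_(1) ⊗ d(a_(2)) = a_(2) ⊗ d(a_(1)) in A⊗H for all a ∈ A, and the antipode of A is involutive (S² = id_A). (Proposition 2.7(ii).) -/

import Mathlib

open TensorProduct

noncomputable section

variable (k A H : Type*) [Field k] [Ring A] [Ring H]
  [HopfAlgebra k A] [HopfAlgebra k H]

/-- `t(a⊗h) = d(a)h`. -/
def tmap (d : A →ₗ[k] H) : A ⊗[k] H →ₗ[k] H :=
  LinearMap.mul' k H ∘ₗ map d LinearMap.id

/-- `s(a⊗h) = ε(a)h`. -/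
def smap : A ⊗[k] H →ₗ[k] H :=
  (TensorProduct.lid k H).toLinearMap ∘ₗ map (Coalgebra.counit : A →ₗ[k] k) LinearMap.id

/-- `i(h) = 1⊗h`. -/
def imap : H →ₗ[k] A ⊗[k] H := TensorProduct.mk k A H 1

/-- The tensor-product coproduct `Δ(a⊗h) = (a₁⊗h₁) ⊗ (a₂⊗h₂)` on `H1 = A ⊗ H`. -/
def comul1 : A ⊗[k] H →ₗ[k] (A ⊗[k] H) ⊗[k] (A ⊗[k] H) :=
  (tensorTensorTensorComm k A A H H).toLinearMap ∘ₗ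
    map (Coalgebra.comul : A →ₗ[k] A ⊗[k] A) (Coalgebra.comul : H →ₗ[k] H ⊗[k] H)

/-- The tensor-product counit `ε(a⊗h) = ε(a)ε(h)` on `H1 = A ⊗ H`. -/
def counit1 : A ⊗[k] H →ₗ[k] k :=
  (TensorProduct.lid k k).toLinearMap ∘ₗ
    map (Coalgebra.counit : A →ₗ[k] k) (Coalgebra.counit : H →ₗ[k] k)

/-- The left coaction `DL = (t⊗id)Δ`. -/
def DLmap (d : A →ₗ[k] H) : A ⊗[k] H →ₗ[k] H ⊗[k] (A ⊗[k] H) :=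
  map (tmap k A H d) LinearMap.id ∘ₗ comul1 k A H

/-- The right coaction `DR = (id⊗s)Δ`. -/
def DRmap : A ⊗[k] H →ₗ[k] (A ⊗[k] H) ⊗[k] H :=
  map LinearMap.id (smap k A H) ∘ₗ comul1 k A H

/-- The second product `(a⊗h)∘(b⊗g) = ε(h) ab ⊗ g`. -/
def circ : (A ⊗[k] H) ⊗[k] (A ⊗[k] H) →ₗ[k] A ⊗[k] H :=
  map (LinearMap.mul' k A)
      ((TensorProduct.lid k H).toLinearMap ∘ₗ map (Coalgebra.counit : H →ₗ[k] k) LinearMap.id)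
    ∘ₗ (tensorTensorTensorComm k A H A H).toLinearMap

/-- The quantum groupoid antipode `𝒮(a⊗h) = S(a₁) ⊗ d(a₂)h`. -/
def SS (d : A →ₗ[k] H) : A ⊗[k] H →ₗ[k] A ⊗[k] H :=
  map (HopfAlgebra.antipode (R := k) : A →ₗ[k] A) (tmap k A H d)
    ∘ₗ (TensorProduct.assoc k A A H).toLinearMap
    ∘ₗ map (Coalgebra.comul : A →ₗ[k] A ⊗[k] A) LinearMap.id

/-- The smash product multiplication `(a⊗h)(b⊗g) = a(h₁▷b) ⊗ h₂g`. -/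
def smashMul (act : H ⊗[k] A →ₗ[k] A) :
    (A ⊗[k] H) ⊗[k] (A ⊗[k] H) →ₗ[k] A ⊗[k] H :=
  map (LinearMap.mul' k A) LinearMap.id
  ∘ₗ (TensorProduct.assoc k A A H).symm.toLinearMap
  ∘ₗ map LinearMap.id
      (map act (LinearMap.mul' k H)
        ∘ₗ (tensorTensorTensorComm k H H A H).toLinearMap)
  ∘ₗ (TensorProduct.assoc k A (H ⊗[k] H) (A ⊗[k] H)).toLinearMap
  ∘ₗ map (map LinearMap.id (Coalgebra.comul : H →ₗ[k] H ⊗[k] H)) LinearMap.id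

/-- The cotensor product `H1□H1`. -/
def cot (d : A →ₗ[k] H) : Set ((A ⊗[k] H) ⊗[k] (A ⊗[k] H)) :=
  {x | (TensorProduct.assoc k (A ⊗[k] H) H (A ⊗[k] H)).toLinearMap
        (map (DRmap k A H) LinearMap.id x) = map LinearMap.id (DLmap k A H d) x}

/-- A Hopf (algebra) crossed module. -/
structure HopfCrossedModule (act : H ⊗[k] A →ₗ[k] A) (d : A →ₗ[k] H) : Prop where
  /-- `(hg)▷a = h▷(g▷a)` -/
  act_mul : ∀ (h g : H) (a : A), act ((h * g) ⊗ₜ[k] a) = act (h ⊗ₜ[k] act (g ⊗ₜ[k] a))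
  /-- `1▷a = a` -/
  act_one : ∀ a : A, act ((1 : H) ⊗ₜ[k] a) = a
  /-- `h▷(ab) = (h₁▷a)(h₂▷b)` -/
  act_mul_alg : act ∘ₗ map LinearMap.id (LinearMap.mul' k A)
      = LinearMap.mul' k A ∘ₗ map act act
          ∘ₗ (tensorTensorTensorComm k H H A A).toLinearMap
          ∘ₗ map (Coalgebra.comul : H →ₗ[k] H ⊗[k] H) LinearMap.id
  /-- `h▷1 = ε(h)1` -/
  act_unit : ∀ h : H, act (h ⊗ₜ[k] (1 : A)) = (Coalgebra.counit h : k) • (1 : A)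
  /-- `Δ(h▷a) = (h₁▷a₁)⊗(h₂▷a₂)` -/
  act_comul : (Coalgebra.comul : A →ₗ[k] A ⊗[k] A) ∘ₗ act
      = map act act ∘ₗ (tensorTensorTensorComm k H H A A).toLinearMap
          ∘ₗ map (Coalgebra.comul : H →ₗ[k] H ⊗[k] H) (Coalgebra.comul : A →ₗ[k] A ⊗[k] A)
  /-- `ε(h▷a) = ε(h)ε(a)` -/
  act_counit : ∀ (h : H) (a : A),
      (Coalgebra.counit (act (h ⊗ₜ[k] a)) : k) = Coalgebra.counit h * Coalgebra.counit a
  /-- `h₁ ⊗ (h₂▷a) = h₂ ⊗ (h₁▷a)` -/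
  act_cocomm : map LinearMap.id act ∘ₗ (TensorProduct.assoc k H H A).toLinearMap
        ∘ₗ map (Coalgebra.comul : H →ₗ[k] H ⊗[k] H) LinearMap.id
      = map LinearMap.id act ∘ₗ (TensorProduct.assoc k H H A).toLinearMap
        ∘ₗ map ((TensorProduct.comm k H H).toLinearMap
              ∘ₗ (Coalgebra.comul : H →ₗ[k] H ⊗[k] H)) LinearMap.id
  /-- `d` is multiplicative -/
  d_mul : ∀ a b : A, d (a * b) = d a * d b
  /-- `d(1) = 1` -/
  d_one : d 1 = 1
  /-- `d` is comultiplicative -/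
  d_comul : (Coalgebra.comul : H →ₗ[k] H ⊗[k] H) ∘ₗ d
      = map d d ∘ₗ (Coalgebra.comul : A →ₗ[k] A ⊗[k] A)
  /-- `ε∘d = ε` -/
  d_counit : (Coalgebra.counit : H →ₗ[k] k) ∘ₗ d = (Coalgebra.counit : A →ₗ[k] k)
  /-- `d(h▷a) = h₁ d(a) S(h₂)` -/
  d_act : d ∘ₗ act = LinearMap.mul' k H
      ∘ₗ map LinearMap.id (LinearMap.mul' k H
            ∘ₗ map LinearMap.id (HopfAlgebra.antipode (R := k) : H →ₗ[k] H)
            ∘ₗ (TensorProduct.comm k H H).toLinearMap)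
      ∘ₗ (TensorProduct.assoc k H H H).toLinearMap
      ∘ₗ map (Coalgebra.comul : H →ₗ[k] H ⊗[k] H) d
  /-- `d(a)▷b = a₁ b S(a₂)` -/
  crossed : act ∘ₗ map d LinearMap.id = LinearMap.mul' k A
      ∘ₗ map LinearMap.id (LinearMap.mul' k A
            ∘ₗ map LinearMap.id (HopfAlgebra.antipode (R := k) : A →ₗ[k] A)
            ∘ₗ (TensorProduct.comm k A A).toLinearMap)
      ∘ₗ (TensorProduct.assoc k A A A).toLinearMap
      ∘ₗ map (Coalgebra.comul : A →ₗ[k] A ⊗[k] A) LinearMap.id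



/-! ### Auxiliary convolution-algebra machinery -/

noncomputable section ConvSec

open Coalgebra

variable {R : Type*} [CommSemiring R] {C : Type*} [AddCommMonoid C] [Module R C] [Coalgebra R C]
variable {B : Type*} [Semiring B] [Algebra R B]

/-- Convolution product on `Hom(C, B)`. -/
def conv (f g : C →ₗ[R] B) : C →ₗ[R] B :=
  LinearMap.mul' R B ∘ₗ TensorProduct.map f g ∘ₗ Coalgebra.comul

/-- Convolution unit. -/
def convOne (R : Type*) [CommSemiring R] (C B : Type*) [AddCommMonoid C] [Module R C]
    [Coalgebra R C] [Semiring B] [Algebra R B] : C →ₗ[R] B :=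
  Algebra.linearMap R B ∘ₗ Coalgebra.counit

lemma conv_repr (f g : C →ₗ[R] B) {ι : Type*} (a : C) (r : Coalgebra.Repr R a ι) :
    conv f g a = ∑ i ∈ r.index, f (r.left i) * g (r.right i) := by
  simp [conv, ← r.eq, map_sum]

lemma sum_counit_smul_right {ι : Type*} (a : C) (r : Coalgebra.Repr R a ι) :
    ∑ i ∈ r.index, Coalgebra.counit (R := R) (r.right i) • r.left i = a := by
  have h := Coalgebra.sum_tmul_counit_eq (R := R) r
  have h2 := congrArg (TensorProduct.rid R C) h
  rw [map_sum] at h2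
  simp only [TensorProduct.rid_tmul, one_smul] at h2
  exact h2

lemma sum_counit_smul_left {ι : Type*} (a : C) (r : Coalgebra.Repr R a ι) :
    ∑ i ∈ r.index, Coalgebra.counit (R := R) (r.left i) • r.right i = a := by
  have h := Coalgebra.sum_counit_tmul_eq (R := R) r
  have h2 := congrArg (TensorProduct.lid R C) h
  rw [map_sum] at h2
  simp only [TensorProduct.lid_tmul, one_smul] at h2
  exact h2

lemma conv_one (f : C →ₗ[R] B) : conv f (convOne R C B) = f := by
  ext a
  rw [conv_repr f _ a (ℛ R a)]
  simp only [convOne, LinearMap.comp_apply, Algebra.linearMap_apply, Algebra.algebraMap_eq_smul_one]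
  calc ∑ i ∈ (ℛ R a).index, f ((ℛ R a).left i) * (counit (R := R) ((ℛ R a).right i) • (1:B))
      = ∑ i ∈ (ℛ R a).index, f (counit (R := R) ((ℛ R a).right i) • (ℛ R a).left i) := by
        simp [mul_smul_comm, map_smul]
    _ = f a := by rw [← map_sum, sum_counit_smul_right]

lemma one_conv (f : C →ₗ[R] B) : conv (convOne R C B) f = f := by
  ext a
  rw [conv_repr _ f a (ℛ R a)]
  simp only [convOne, LinearMap.comp_apply, Algebra.linearMap_apply, Algebra.algebraMap_eq_smul_one]
  calc ∑ i ∈ (ℛ R a).index, (counit (R := R) ((ℛ R a).left i) • (1:B)) * f ((ℛ R a).right i)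
      = ∑ i ∈ (ℛ R a).index, f (counit (R := R) ((ℛ R a).left i) • (ℛ R a).right i) := by
        simp [smul_mul_assoc, map_smul]
    _ = f a := by rw [← map_sum, sum_counit_smul_left]

lemma conv_assoc (f g h : C →ₗ[R] B) : conv (conv f g) h = conv f (conv g h) := by
  ext a
  have key := Coalgebra.sum_map_tmul_tmul_eq (R := R) f g h a (repr := ℛ R a)
    (a₁ := fun i => ℛ R ((ℛ R a).left i)) (a₂ := fun i => ℛ R ((ℛ R a).right i))
  have key2 := congrArg (LinearMap.mul' R B ∘ₗ LinearMap.lTensor B (LinearMap.mul' R B)) key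
  simp only [map_sum, LinearMap.comp_apply, LinearMap.lTensor_tmul, LinearMap.mul'_apply] at key2
  rw [conv_repr (conv f g) h a (ℛ R a), conv_repr f (conv g h) a (ℛ R a)]
  calc ∑ i ∈ (ℛ R a).index, conv f g ((ℛ R a).left i) * h ((ℛ R a).right i)
      = ∑ i ∈ (ℛ R a).index, ∑ j ∈ (ℛ R ((ℛ R a).left i)).index,
          f ((ℛ R ((ℛ R a).left i)).left j) *
            (g ((ℛ R ((ℛ R a).left i)).right j) * h ((ℛ R a).right i)) := by
        refine Finset.sum_congr rfl fun i _ => ?_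
        rw [conv_repr f g _ (ℛ R ((ℛ R a).left i)), Finset.sum_mul]
        simp [mul_assoc]
    _ = ∑ i ∈ (ℛ R a).index, ∑ j ∈ (ℛ R ((ℛ R a).right i)).index,
          f ((ℛ R a).left i) *
            (g ((ℛ R ((ℛ R a).right i)).left j) * h ((ℛ R ((ℛ R a).right i)).right j)) := key2.symm
    _ = ∑ i ∈ (ℛ R a).index, f ((ℛ R a).left i) * conv g h ((ℛ R a).right i) := by
        refine Finset.sum_congr rfl fun i _ => ?_
        rw [conv_repr g h _ (ℛ R ((ℛ R a).right i)), Finset.mul_sum]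

lemma conv_inv_unique {x y z : C →ₗ[R] B} (h1 : conv x y = convOne R C B)
    (h2 : conv z x = convOne R C B) : y = z := by
  have : conv z (conv x y) = conv (conv z x) y := (conv_assoc z x y).symm
  rw [h1, h2, conv_one, one_conv] at this
  exact this.symm

end ConvSec

noncomputable section HopfFacts

open Coalgebra

variable {R : Type*} [CommSemiring R] {L : Type*} [Semiring L] [HopfAlgebra R L]

lemma counit_antipode (x : L) :
    Coalgebra.counit (R := R) (HopfAlgebra.antipode (R := R) x) = Coalgebra.counit (R := R) x := by
  have h := congrArg (Coalgebra.counit (R := R)) (HopfAlgebra.sum_antipode_mul_eq_algebraMap_counit (R := R) (ℛ R x))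
  rw [map_sum] at h
  simp only [Bialgebra.counit_mul, Bialgebra.counit_algebraMap] at h
  calc Coalgebra.counit (R := R) (HopfAlgebra.antipode (R := R) x)
      = Coalgebra.counit (R := R) (HopfAlgebra.antipode (R := R)
          (∑ i ∈ (ℛ R x).index, Coalgebra.counit (R := R) ((ℛ R x).right i) • (ℛ R x).left i)) := by
        rw [sum_counit_smul_right]
    _ = Coalgebra.counit (R := R) x := by
        rw [map_sum, map_sum] at *
        simpa [map_smul, smul_eq_mul, mul_comm] using h

lemma conv_id_antipode :
    conv (LinearMap.id : L →ₗ[R] L) (HopfAlgebra.antipode (R := R)) = convOne R L L := by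
  ext x
  rw [conv_repr _ _ x (ℛ R x)]
  simpa [convOne] using HopfAlgebra.sum_mul_antipode_eq_algebraMap_counit (R := R) (ℛ R x)

lemma conv_antipode_id :
    conv (HopfAlgebra.antipode (R := R)) (LinearMap.id : L →ₗ[R] L) = convOne R L L := by
  ext x
  rw [conv_repr _ _ x (ℛ R x)]
  simpa [convOne] using HopfAlgebra.sum_antipode_mul_eq_algebraMap_counit (R := R) (ℛ R x)


/-- `Σ (S x₁ ⊗ 1) * Δ x₂ = 1 ⊗ x`. -/
lemma conv_antipode_flip_comul :
    conv ((((TensorProduct.mk R L L).flip) 1) ∘ₗ (HopfAlgebra.antipode (R := R) : L →ₗ[R] L))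
      (Coalgebra.comul) = TensorProduct.mk R L L 1 := by
  ext x
  set r := ℛ R x with hr
  set r1 : ∀ i, Coalgebra.Repr R (r.left i) (L × L) := fun i => ℛ R (r.left i) with hr1
  set r2 : ∀ i, Coalgebra.Repr R (r.right i) (L × L) := fun i => ℛ R (r.right i) with hr2
  -- expand the convolution
  have expand : conv ((((TensorProduct.mk R L L).flip) 1) ∘ₗ
        (HopfAlgebra.antipode (R := R) : L →ₗ[R] L)) (Coalgebra.comul) x
      = ∑ i ∈ r.index, ∑ k ∈ (r2 i).index,
          (HopfAlgebra.antipode (R := R) (r.left i) * (r2 i).left k) ⊗ₜ[R] (r2 i).right k := by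
    rw [conv_repr _ _ x r]
    refine Finset.sum_congr rfl fun i _ => ?_
    rw [← (r2 i).eq, Finset.mul_sum]
    simp [Algebra.TensorProduct.tmul_mul_tmul]
  -- the reassociation map Θ : p ⊗ (q ⊗ c) ↦ S(p)q ⊗ c
  set Θ : L ⊗[R] (L ⊗[R] L) →ₗ[R] L ⊗[R] L :=
    LinearMap.rTensor L (LinearMap.mul' R L ∘ₗ
        LinearMap.rTensor L (HopfAlgebra.antipode (R := R)))
      ∘ₗ (TensorProduct.assoc R L L L).symm.toLinearMap with hΘ
  have Θpure : ∀ (p q c : L), Θ (p ⊗ₜ[R] (q ⊗ₜ[R] c))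
      = (HopfAlgebra.antipode (R := R) p * q) ⊗ₜ[R] c := by
    intro p q c; simp [hΘ]
  have key := Coalgebra.sum_tmul_tmul_eq (R := R) r r1 r2
  have key2 := congrArg Θ key
  rw [map_sum, map_sum] at key2
  simp only [map_sum, Θpure] at key2
  rw [expand, ← key2]
  calc ∑ i ∈ r.index, ∑ j ∈ (r1 i).index,
        (HopfAlgebra.antipode (R := R) ((r1 i).left j) * (r1 i).right j) ⊗ₜ[R] r.right i
      = ∑ i ∈ r.index, (Coalgebra.counit (R := R) (r.left i) • (1:L)) ⊗ₜ[R] r.right i := by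
        refine Finset.sum_congr rfl fun i _ => ?_
        rw [← TensorProduct.sum_tmul, HopfAlgebra.sum_antipode_mul_eq_smul (r1 i)]
    _ = (1:L) ⊗ₜ[R] (∑ i ∈ r.index, Coalgebra.counit (R := R) (r.left i) • r.right i) := by
        rw [TensorProduct.tmul_sum]
        refine Finset.sum_congr rfl fun i _ => ?_
        rw [TensorProduct.tmul_smul, ← TensorProduct.smul_tmul']
    _ = (1:L) ⊗ₜ[R] x := by rw [sum_counit_smul_left]
    _ = TensorProduct.mk R L L 1 x := rfl

/-- `Δ * (Δ ∘ S) = 1` in `Hom(L, L⊗L)`. -/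
lemma conv_comul_comulAntipode :
    conv (Coalgebra.comul : L →ₗ[R] L ⊗[R] L)
      (Coalgebra.comul ∘ₗ (HopfAlgebra.antipode (R := R) : L →ₗ[R] L)) = convOne R L (L ⊗[R] L) := by
  ext x
  rw [conv_repr _ _ x (ℛ R x)]
  calc ∑ i ∈ (ℛ R x).index,
        Coalgebra.comul (R := R) ((ℛ R x).left i) *
          Coalgebra.comul (R := R) (HopfAlgebra.antipode (R := R) ((ℛ R x).right i))
      = Coalgebra.comul (R := R)
          (∑ i ∈ (ℛ R x).index, (ℛ R x).left i * HopfAlgebra.antipode (R := R) ((ℛ R x).right i)) := by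
        rw [map_sum]
        exact Finset.sum_congr rfl fun i _ => (Bialgebra.comul_mul _ _).symm
    _ = convOne R L (L ⊗[R] L) x := by
        rw [HopfAlgebra.sum_mul_antipode_eq_algebraMap_counit (ℛ R x)]
        simp [convOne, Bialgebra.comul_algebraMap]

/-- `((S⊗S)∘τ∘Δ) * Δ = 1` in `Hom(L, L⊗L)`. -/
lemma conv_antiG_comul :
    conv (TensorProduct.map (HopfAlgebra.antipode (R := R)) (HopfAlgebra.antipode (R := R))
        ∘ₗ (TensorProduct.comm R L L).toLinearMap ∘ₗ (Coalgebra.comul : L →ₗ[R] L ⊗[R] L))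
      (Coalgebra.comul) = convOne R L (L ⊗[R] L) := by
  ext x
  set r := ℛ R x with hr
  set r1 : ∀ i, Coalgebra.Repr R (r.left i) (L × L) := fun i => ℛ R (r.left i) with hr1
  set r2 : ∀ i, Coalgebra.Repr R (r.right i) (L × L) := fun i => ℛ R (r.right i) with hr2
  set S : L →ₗ[R] L := HopfAlgebra.antipode (R := R) with hS
  -- Φ' (p ⊗ (q ⊗ c)) = (1 ⊗ S p) * ((S q ⊗ 1) * Δ c)
  set Φ : L ⊗[R] (L ⊗[R] L) →ₗ[R] L ⊗[R] L :=
    LinearMap.mul' R (L ⊗[R] L) ∘ₗ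
      TensorProduct.map (TensorProduct.mk R L L 1 ∘ₗ S)
        (LinearMap.mul' R (L ⊗[R] L) ∘ₗ
          TensorProduct.map (((TensorProduct.mk R L L).flip) 1 ∘ₗ S) Coalgebra.comul) with hΦ
  have Φpure : ∀ (p q c : L), Φ (p ⊗ₜ[R] (q ⊗ₜ[R] c))
      = ((1:L) ⊗ₜ[R] S p) * (((S q) ⊗ₜ[R] (1:L)) * Coalgebra.comul (R := R) c) := by
    intro p q c; simp [hΦ]
  have key := Coalgebra.sum_tmul_tmul_eq (R := R) r r1 r2
  have key2 := congrArg Φ key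
  rw [map_sum, map_sum] at key2
  simp only [map_sum, Φpure] at key2
  -- LHS of key2 equals conv G Δ x
  have expand : conv (TensorProduct.map S S
        ∘ₗ (TensorProduct.comm R L L).toLinearMap ∘ₗ (Coalgebra.comul : L →ₗ[R] L ⊗[R] L))
      (Coalgebra.comul) x
      = ∑ i ∈ r.index, ∑ j ∈ (r1 i).index,
          ((1:L) ⊗ₜ[R] S ((r1 i).left j)) *
            ((S ((r1 i).right j) ⊗ₜ[R] (1:L)) * Coalgebra.comul (R := R) (r.right i)) := by
    rw [conv_repr _ _ x r]
    refine Finset.sum_congr rfl fun i _ => ?_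
    rw [LinearMap.comp_apply, LinearMap.comp_apply, LinearEquiv.coe_coe, ← (r1 i).eq, map_sum,
      map_sum, Finset.sum_mul]
    refine Finset.sum_congr rfl fun j _ => ?_
    rw [TensorProduct.comm_tmul, TensorProduct.map_tmul, ← mul_assoc,
      Algebra.TensorProduct.tmul_mul_tmul, one_mul, mul_one]
  rw [expand, key2]
  -- now collapse the RHS
  calc ∑ i ∈ r.index, ∑ k ∈ (r2 i).index,
        ((1:L) ⊗ₜ[R] S (r.left i)) *
          ((S ((r2 i).left k) ⊗ₜ[R] (1:L)) * Coalgebra.comul (R := R) ((r2 i).right k))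
      = ∑ i ∈ r.index, ((1:L) ⊗ₜ[R] S (r.left i)) * ((1:L) ⊗ₜ[R] r.right i) := by
        refine Finset.sum_congr rfl fun i _ => ?_
        rw [← Finset.mul_sum]
        congr 1
        have := congrArg (fun f => f (r.right i)) (conv_antipode_flip_comul (R := R) (L := L))
        simp only [conv_repr _ _ (r.right i) (r2 i)] at this
        simpa using this
    _ = (1:L) ⊗ₜ[R] (∑ i ∈ r.index, S (r.left i) * r.right i) := by
        rw [TensorProduct.tmul_sum]
        refine Finset.sum_congr rfl fun i _ => ?_
        rw [Algebra.TensorProduct.tmul_mul_tmul, one_mul]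
    _ = convOne R L (L ⊗[R] L) x := by
        rw [HopfAlgebra.sum_antipode_mul_eq_algebraMap_counit (ℛ R x)]
        simp only [convOne, LinearMap.comp_apply, Algebra.linearMap_apply,
          Algebra.TensorProduct.algebraMap_apply, Algebra.algebraMap_eq_smul_one,
          Algebra.TensorProduct.one_def]
        rw [TensorProduct.tmul_smul]

/-- The antipode is an anti-coalgebra morphism. -/
lemma comul_comp_antipode :
    (Coalgebra.comul : L →ₗ[R] L ⊗[R] L) ∘ₗ (HopfAlgebra.antipode (R := R))
      = TensorProduct.map (HopfAlgebra.antipode (R := R)) (HopfAlgebra.antipode (R := R))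
        ∘ₗ (TensorProduct.comm R L L).toLinearMap ∘ₗ Coalgebra.comul :=
  conv_inv_unique conv_comul_comulAntipode conv_antiG_comul

end HopfFacts

noncomputable section Specific

open Coalgebra

variable {k A H : Type*} [Field k] [Ring A] [Ring H] [HopfAlgebra k A] [HopfAlgebra k H]

/-- A representation of `comul (S x)` obtained from one of `comul x`. -/
def antipodeRepr {ι : Type*} (x : A) (r : Coalgebra.Repr k x ι) :
    Coalgebra.Repr k (HopfAlgebra.antipode (R := k) x) ι where
  index := r.index
  left i := HopfAlgebra.antipode (R := k) (r.right i)
  right i := HopfAlgebra.antipode (R := k) (r.left i)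
  eq := by
    have h := LinearMap.congr_fun (comul_comp_antipode (R := k) (L := A)) x
    simp only [LinearMap.comp_apply, LinearEquiv.coe_coe] at h
    rw [h, ← r.eq, map_sum, map_sum]
    simp

/-- A representation of `comul (d x)` obtained from one of `comul x`. -/
def dRepr (d : A →ₗ[k] H)
    (hd : (Coalgebra.comul : H →ₗ[k] H ⊗[k] H) ∘ₗ d
      = TensorProduct.map d d ∘ₗ (Coalgebra.comul : A →ₗ[k] A ⊗[k] A))
    {ι : Type*} (x : A) (r : Coalgebra.Repr k x ι) : Coalgebra.Repr k (d x) ι where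
  index := r.index
  left i := d (r.left i)
  right i := d (r.right i)
  eq := by
    have h := LinearMap.congr_fun hd x
    simp only [LinearMap.comp_apply] at h
    rw [h, ← r.eq, map_sum]
    simp

/-- `d` commutes with the antipodes. -/
lemma d_antipode (d : A →ₗ[k] H)
    (hd_comul : (Coalgebra.comul : H →ₗ[k] H ⊗[k] H) ∘ₗ d
      = TensorProduct.map d d ∘ₗ (Coalgebra.comul : A →ₗ[k] A ⊗[k] A))
    (hd_counit : (Coalgebra.counit : H →ₗ[k] k) ∘ₗ d = (Coalgebra.counit : A →ₗ[k] k))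
    (hd_mul : ∀ a b : A, d (a * b) = d a * d b) (hd_one : d 1 = 1) :
    d ∘ₗ (HopfAlgebra.antipode (R := k) : A →ₗ[k] A)
      = (HopfAlgebra.antipode (R := k) : H →ₗ[k] H) ∘ₗ d := by
  refine conv_inv_unique (x := d) ?_ ?_
  · -- conv d (d ∘ S) = 1
    ext x
    rw [conv_repr _ _ x (ℛ k x)]
    have : ∑ i ∈ (ℛ k x).index, d ((ℛ k x).left i) *
          (d ∘ₗ (HopfAlgebra.antipode (R := k) : A →ₗ[k] A)) ((ℛ k x).right i)
        = d (∑ i ∈ (ℛ k x).index,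
            (ℛ k x).left i * HopfAlgebra.antipode (R := k) ((ℛ k x).right i)) := by
      rw [map_sum]
      exact Finset.sum_congr rfl fun i _ => (hd_mul _ _).symm
    rw [this, HopfAlgebra.sum_mul_antipode_eq_algebraMap_counit (ℛ k x)]
    simp only [Algebra.algebraMap_eq_smul_one, map_smul, hd_one, convOne,
      LinearMap.comp_apply, Algebra.linearMap_apply]
  · -- conv (S ∘ d) d = 1
    ext x
    rw [conv_repr _ _ x (ℛ k x)]
    have h := HopfAlgebra.sum_antipode_mul_eq_algebraMap_counit (R := k) (dRepr d hd_comul x (ℛ k x))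
    simp only [dRepr] at h
    rw [show ∑ i ∈ (ℛ k x).index,
          ((HopfAlgebra.antipode (R := k) : H →ₗ[k] H) ∘ₗ d) ((ℛ k x).left i) * d ((ℛ k x).right i)
        = ∑ i ∈ (ℛ k x).index,
          HopfAlgebra.antipode (R := k) (d ((ℛ k x).left i)) * d ((ℛ k x).right i) from rfl, h]
    have := LinearMap.congr_fun hd_counit x
    simp only [LinearMap.comp_apply] at this
    simp [convOne, this]

lemma SS_tmul (d : A →ₗ[k] H) {ι : Type*} (a : A) (h : H) (r : Coalgebra.Repr k a ι) :
    SS k A H d (a ⊗ₜ[k] h)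
      = ∑ i ∈ r.index,
          HopfAlgebra.antipode (R := k) (r.left i) ⊗ₜ[k] (d (r.right i) * h) := by
  simp only [SS, LinearMap.comp_apply, TensorProduct.map_tmul, LinearMap.id_apply]
  rw [← r.eq, TensorProduct.sum_tmul, map_sum, map_sum]
  refine Finset.sum_congr rfl fun i _ => ?_
  simp [tmap]

lemma SS_SS_tmul (d : A →ₗ[k] H)
    (hdS : d ∘ₗ (HopfAlgebra.antipode (R := k) : A →ₗ[k] A)
      = (HopfAlgebra.antipode (R := k) : H →ₗ[k] H) ∘ₗ d)
    {ι κ : Type*} (a : A) (h : H) (r : Coalgebra.Repr k a ι) (r1 : ∀ i, Coalgebra.Repr k (r.left i) κ) :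
    SS k A H d (SS k A H d (a ⊗ₜ[k] h))
      = ∑ i ∈ r.index, ∑ j ∈ (r1 i).index,
          HopfAlgebra.antipode (R := k) (HopfAlgebra.antipode (R := k) ((r1 i).right j))
            ⊗ₜ[k] (HopfAlgebra.antipode (R := k) (d ((r1 i).left j)) * (d (r.right i) * h)) := by
  rw [SS_tmul d a h r, map_sum]
  refine Finset.sum_congr rfl fun i _ => ?_
  rw [SS_tmul d _ _ (antipodeRepr (r.left i) (r1 i))]
  refine Finset.sum_congr rfl fun j _ => ?_
  have hj : d (HopfAlgebra.antipode (R := k) ((r1 i).left j))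
      = HopfAlgebra.antipode (R := k) (d ((r1 i).left j)) := by
    have := LinearMap.congr_fun hdS ((r1 i).left j)
    simpa using this
  simp only [antipodeRepr, hj]

end Specific

/-- Proposition 2.7(ii): `𝒮² = id` iff `a₁ ⊗ d(a₂) = a₂ ⊗ d(a₁)` for all `a ∈ A` and
the antipode of `A` is involutive. -/
theorem statement11 (act : H ⊗[k] A →ₗ[k] A) (d : A →ₗ[k] H)
    (hcm : HopfCrossedModule k A H act d) :
    SS k A H d ∘ₗ SS k A H d = LinearMap.id
      ↔ (map LinearMap.id d ∘ₗ (Coalgebra.comul : A →ₗ[k] A ⊗[k] A)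
            = map LinearMap.id d ∘ₗ (TensorProduct.comm k A A).toLinearMap
                ∘ₗ (Coalgebra.comul : A →ₗ[k] A ⊗[k] A)
          ∧ (HopfAlgebra.antipode (R := k) : A →ₗ[k] A)
              ∘ₗ (HopfAlgebra.antipode (R := k) : A →ₗ[k] A) = LinearMap.id) := by
  classical
  have hdS : d ∘ₗ (HopfAlgebra.antipode (R := k) : A →ₗ[k] A)
      = (HopfAlgebra.antipode (R := k) : H →ₗ[k] H) ∘ₗ d :=
    d_antipode d hcm.d_comul hcm.d_counit hcm.d_mul hcm.d_one
  have hdc : ∀ z : A, (Coalgebra.counit (d z) : k) = Coalgebra.counit z := fun z => by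
    simpa using LinearMap.congr_fun hcm.d_counit z
  constructor
  · intro hid
    have E : ∀ a : A,
        (∑ i ∈ (Coalgebra.Repr.arbitrary k a).index,
          ∑ j ∈ (Coalgebra.Repr.arbitrary k ((Coalgebra.Repr.arbitrary k a).left i)).index,
          HopfAlgebra.antipode (R := k) (HopfAlgebra.antipode (R := k)
              ((Coalgebra.Repr.arbitrary k ((Coalgebra.Repr.arbitrary k a).left i)).right j))
            ⊗ₜ[k] (HopfAlgebra.antipode (R := k)
                (d ((Coalgebra.Repr.arbitrary k ((Coalgebra.Repr.arbitrary k a).left i)).left j))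
              * (d ((Coalgebra.Repr.arbitrary k a).right i) * 1)))
        = a ⊗ₜ[k] (1 : H) := by
      intro a
      have h1 := LinearMap.congr_fun hid (a ⊗ₜ[k] (1 : H))
      rw [LinearMap.comp_apply, LinearMap.id_apply,
        SS_SS_tmul d hdS a 1 (Coalgebra.Repr.arbitrary k a)
          (fun i => Coalgebra.Repr.arbitrary k ((Coalgebra.Repr.arbitrary k a).left i))] at h1
      exact h1
    have hS2 : ∀ x : A,
        HopfAlgebra.antipode (R := k) (HopfAlgebra.antipode (R := k) x) = x := by
      intro x
      have h2 := congrArg ((TensorProduct.rid k A).toLinearMap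
          ∘ₗ LinearMap.lTensor A (Coalgebra.counit : H →ₗ[k] k)) (E x)
      simp only [map_sum, LinearMap.comp_apply, LinearMap.lTensor_tmul, LinearEquiv.coe_coe,
        TensorProduct.rid_tmul, mul_one, Bialgebra.counit_mul, Bialgebra.counit_one, one_smul,
        counit_antipode, hdc] at h2
      have step : ∀ i, ∑ j ∈ (Coalgebra.Repr.arbitrary k ((Coalgebra.Repr.arbitrary k x).left i)).index,
            ((Coalgebra.counit ((Coalgebra.Repr.arbitrary k ((Coalgebra.Repr.arbitrary k x).left i)).left j) : k)
                * (Coalgebra.counit ((Coalgebra.Repr.arbitrary k x).right i) : k))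
              • HopfAlgebra.antipode (R := k) (HopfAlgebra.antipode (R := k)
                  ((Coalgebra.Repr.arbitrary k ((Coalgebra.Repr.arbitrary k x).left i)).right j))
          = (Coalgebra.counit ((Coalgebra.Repr.arbitrary k x).right i) : k)
              • HopfAlgebra.antipode (R := k) (HopfAlgebra.antipode (R := k)
                  ((Coalgebra.Repr.arbitrary k x).left i)) := by
        intro i
        conv_rhs => rw [← sum_counit_smul_left _
          (Coalgebra.Repr.arbitrary k ((Coalgebra.Repr.arbitrary k x).left i))]
        rw [map_sum, map_sum, Finset.smul_sum]
        refine Finset.sum_congr rfl fun j _ => ?_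
        rw [map_smul, map_smul, smul_smul, mul_comm]
      calc HopfAlgebra.antipode (R := k) (HopfAlgebra.antipode (R := k) x)
          = HopfAlgebra.antipode (R := k) (HopfAlgebra.antipode (R := k)
              (∑ i ∈ (Coalgebra.Repr.arbitrary k x).index,
                (Coalgebra.counit ((Coalgebra.Repr.arbitrary k x).right i) : k)
                  • (Coalgebra.Repr.arbitrary k x).left i)) := by
            rw [sum_counit_smul_right]
        _ = ∑ i ∈ (Coalgebra.Repr.arbitrary k x).index,
              (Coalgebra.counit ((Coalgebra.Repr.arbitrary k x).right i) : k)
                • HopfAlgebra.antipode (R := k) (HopfAlgebra.antipode (R := k)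
                    ((Coalgebra.Repr.arbitrary k x).left i)) := by
            rw [map_sum, map_sum]
            exact Finset.sum_congr rfl fun i _ => by rw [map_smul, map_smul]
        _ = ∑ i ∈ (Coalgebra.Repr.arbitrary k x).index,
              ∑ j ∈ (Coalgebra.Repr.arbitrary k ((Coalgebra.Repr.arbitrary k x).left i)).index,
              ((Coalgebra.counit ((Coalgebra.Repr.arbitrary k ((Coalgebra.Repr.arbitrary k x).left i)).left j) : k)
                  * (Coalgebra.counit ((Coalgebra.Repr.arbitrary k x).right i) : k))
                • HopfAlgebra.antipode (R := k) (HopfAlgebra.antipode (R := k)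
                    ((Coalgebra.Repr.arbitrary k ((Coalgebra.Repr.arbitrary k x).left i)).right j)) :=
            Finset.sum_congr rfl fun i _ => (step i).symm
        _ = x := h2
    refine ⟨?_, LinearMap.ext fun x => by simpa using hS2 x⟩
    -- cocommutativity, via a convolution argument in Hom(A, A ⊗ H)
    have c2 : conv (TensorProduct.mk k A H 1 ∘ₗ d)
        (TensorProduct.mk k A H 1 ∘ₗ (HopfAlgebra.antipode (R := k) : H →ₗ[k] H) ∘ₗ d)
        = convOne k A (A ⊗[k] H) := by
      ext x
      rw [conv_repr _ _ x (Coalgebra.Repr.arbitrary k x)]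
      have collapse : ∑ i ∈ (Coalgebra.Repr.arbitrary k x).index,
            (TensorProduct.mk k A H 1 ∘ₗ d) ((Coalgebra.Repr.arbitrary k x).left i) *
              ((TensorProduct.mk k A H 1 ∘ₗ (HopfAlgebra.antipode (R := k) : H →ₗ[k] H) ∘ₗ d)
                ((Coalgebra.Repr.arbitrary k x).right i))
          = (1 : A) ⊗ₜ[k] (∑ i ∈ (Coalgebra.Repr.arbitrary k x).index,
              d ((Coalgebra.Repr.arbitrary k x).left i) *
                HopfAlgebra.antipode (R := k) (d ((Coalgebra.Repr.arbitrary k x).right i))) := by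
        rw [TensorProduct.tmul_sum]
        refine Finset.sum_congr rfl fun i _ => ?_
        simp [Algebra.TensorProduct.tmul_mul_tmul]
      have h := HopfAlgebra.sum_mul_antipode_eq_algebraMap_counit (R := k)
        (dRepr d hcm.d_comul x (Coalgebra.Repr.arbitrary k x))
      simp only [dRepr] at h
      rw [collapse, h, hdc x]
      simp [convOne, Algebra.algebraMap_eq_smul_one, Algebra.TensorProduct.one_def,
        TensorProduct.tmul_smul, TensorProduct.smul_tmul']
    have c1 : conv (TensorProduct.mk k A H 1 ∘ₗ (HopfAlgebra.antipode (R := k) : H →ₗ[k] H) ∘ₗ d)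
        (TensorProduct.map LinearMap.id d ∘ₗ (Coalgebra.comul : A →ₗ[k] A ⊗[k] A))
        = (TensorProduct.mk k A H).flip 1 := by
      ext x
      rw [conv_repr _ _ x (Coalgebra.Repr.arbitrary k x)]
      set Ω : A ⊗[k] (A ⊗[k] A) →ₗ[k] A ⊗[k] H :=
        TensorProduct.map LinearMap.id
            (LinearMap.mul' k H ∘ₗ TensorProduct.map
              ((HopfAlgebra.antipode (R := k) : H →ₗ[k] H) ∘ₗ d) d)
          ∘ₗ (TensorProduct.assoc k A A A).toLinearMap
          ∘ₗ LinearMap.rTensor A (TensorProduct.comm k A A).toLinearMap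
          ∘ₗ (TensorProduct.assoc k A A A).symm.toLinearMap with hΩ
      have Ωpure : ∀ (p q c : A), Ω (p ⊗ₜ[k] (q ⊗ₜ[k] c))
          = q ⊗ₜ[k] (HopfAlgebra.antipode (R := k) (d p) * d c) := by
        intro p q c; simp [hΩ]
      have key := Coalgebra.sum_tmul_tmul_eq (R := k) (Coalgebra.Repr.arbitrary k x)
        (fun i => Coalgebra.Repr.arbitrary k ((Coalgebra.Repr.arbitrary k x).left i))
        (fun i => Coalgebra.Repr.arbitrary k ((Coalgebra.Repr.arbitrary k x).right i))
      have key2 := congrArg Ω key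
      rw [map_sum, map_sum] at key2
      simp only [map_sum, Ωpure] at key2
      have h1 := E x
      simp only [hS2, mul_one] at h1
      calc ∑ i ∈ (Coalgebra.Repr.arbitrary k x).index,
            (TensorProduct.mk k A H 1 ∘ₗ (HopfAlgebra.antipode (R := k) : H →ₗ[k] H) ∘ₗ d)
                ((Coalgebra.Repr.arbitrary k x).left i) *
              ((TensorProduct.map LinearMap.id d ∘ₗ (Coalgebra.comul : A →ₗ[k] A ⊗[k] A))
                ((Coalgebra.Repr.arbitrary k x).right i))
          = ∑ i ∈ (Coalgebra.Repr.arbitrary k x).index,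
              ∑ j ∈ (Coalgebra.Repr.arbitrary k ((Coalgebra.Repr.arbitrary k x).right i)).index,
              (Coalgebra.Repr.arbitrary k ((Coalgebra.Repr.arbitrary k x).right i)).left j
                ⊗ₜ[k] (HopfAlgebra.antipode (R := k) (d ((Coalgebra.Repr.arbitrary k x).left i)) *
                  d ((Coalgebra.Repr.arbitrary k ((Coalgebra.Repr.arbitrary k x).right i)).right j)) := by
            refine Finset.sum_congr rfl fun i _ => ?_
            simp only [LinearMap.comp_apply]
            rw [← (Coalgebra.Repr.arbitrary k ((Coalgebra.Repr.arbitrary k x).right i)).eq,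
              map_sum, Finset.mul_sum]
            refine Finset.sum_congr rfl fun j _ => ?_
            simp [Algebra.TensorProduct.tmul_mul_tmul]
        _ = ∑ i ∈ (Coalgebra.Repr.arbitrary k x).index,
              ∑ j ∈ (Coalgebra.Repr.arbitrary k ((Coalgebra.Repr.arbitrary k x).left i)).index,
              (Coalgebra.Repr.arbitrary k ((Coalgebra.Repr.arbitrary k x).left i)).right j
                ⊗ₜ[k] (HopfAlgebra.antipode (R := k)
                    (d ((Coalgebra.Repr.arbitrary k ((Coalgebra.Repr.arbitrary k x).left i)).left j)) *
                  d ((Coalgebra.Repr.arbitrary k x).right i)) := key2.symm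
        _ = x ⊗ₜ[k] (1 : H) := h1
        _ = ((TensorProduct.mk k A H).flip 1) x := by simp
    have c3 : conv (TensorProduct.mk k A H 1 ∘ₗ d) ((TensorProduct.mk k A H).flip 1)
        = TensorProduct.map LinearMap.id d
            ∘ₗ (TensorProduct.comm k A A).toLinearMap ∘ₗ (Coalgebra.comul : A →ₗ[k] A ⊗[k] A) := by
      ext x
      rw [conv_repr _ _ x (Coalgebra.Repr.arbitrary k x)]
      have expand : (TensorProduct.map LinearMap.id d
            ∘ₗ (TensorProduct.comm k A A).toLinearMap
            ∘ₗ (Coalgebra.comul : A →ₗ[k] A ⊗[k] A)) x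
          = ∑ i ∈ (Coalgebra.Repr.arbitrary k x).index,
              (Coalgebra.Repr.arbitrary k x).right i ⊗ₜ[k] d ((Coalgebra.Repr.arbitrary k x).left i) := by
        rw [LinearMap.comp_apply, LinearMap.comp_apply, LinearEquiv.coe_coe,
          ← (Coalgebra.Repr.arbitrary k x).eq, map_sum, map_sum]
        simp
      rw [expand]
      refine Finset.sum_congr rfl fun i _ => ?_
      simp [Algebra.TensorProduct.tmul_mul_tmul]
    calc TensorProduct.map LinearMap.id d ∘ₗ (Coalgebra.comul : A →ₗ[k] A ⊗[k] A)
        = conv (convOne k A (A ⊗[k] H))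
            (TensorProduct.map LinearMap.id d ∘ₗ (Coalgebra.comul : A →ₗ[k] A ⊗[k] A)) :=
          (one_conv _).symm
      _ = conv (conv (TensorProduct.mk k A H 1 ∘ₗ d)
            (TensorProduct.mk k A H 1 ∘ₗ (HopfAlgebra.antipode (R := k) : H →ₗ[k] H) ∘ₗ d))
            (TensorProduct.map LinearMap.id d ∘ₗ (Coalgebra.comul : A →ₗ[k] A ⊗[k] A)) := by
          rw [c2]
      _ = conv (TensorProduct.mk k A H 1 ∘ₗ d)
            (conv (TensorProduct.mk k A H 1 ∘ₗ (HopfAlgebra.antipode (R := k) : H →ₗ[k] H) ∘ₗ d)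
              (TensorProduct.map LinearMap.id d ∘ₗ (Coalgebra.comul : A →ₗ[k] A ⊗[k] A))) :=
          conv_assoc _ _ _
      _ = conv (TensorProduct.mk k A H 1 ∘ₗ d) ((TensorProduct.mk k A H).flip 1) := by rw [c1]
      _ = _ := c3
  · rintro ⟨hC, hS⟩
    have hS2 : ∀ x : A,
        HopfAlgebra.antipode (R := k) (HopfAlgebra.antipode (R := k) x) = x := fun x => by
      simpa using LinearMap.congr_fun hS x
    apply TensorProduct.ext'
    intro a h
    rw [LinearMap.comp_apply,
      SS_SS_tmul d hdS a h (Coalgebra.Repr.arbitrary k a)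
        (fun i => Coalgebra.Repr.arbitrary k ((Coalgebra.Repr.arbitrary k a).left i))]
    have key := Coalgebra.sum_tmul_tmul_eq (R := k) (Coalgebra.Repr.arbitrary k a)
      (fun i => Coalgebra.Repr.arbitrary k ((Coalgebra.Repr.arbitrary k a).left i))
      (fun i => Coalgebra.Repr.arbitrary k ((Coalgebra.Repr.arbitrary k a).right i))
    set Ξ : A ⊗[k] (A ⊗[k] A) →ₗ[k] A ⊗[k] H :=
      LinearMap.lTensor A (LinearMap.mulRight k h ∘ₗ LinearMap.mul' k H
        ∘ₗ TensorProduct.map ((HopfAlgebra.antipode (R := k) : H →ₗ[k] H) ∘ₗ d) d) with hΞ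
    have Ξpure : ∀ (p q c : A), Ξ (p ⊗ₜ[k] (q ⊗ₜ[k] c))
        = p ⊗ₜ[k] (HopfAlgebra.antipode (R := k) (d q) * d c * h) := by
      intro p q c; simp [hΞ]
    have key2 := congrArg Ξ key
    rw [map_sum, map_sum] at key2
    simp only [map_sum, Ξpure] at key2
    calc ∑ i ∈ (Coalgebra.Repr.arbitrary k a).index,
          ∑ j ∈ (Coalgebra.Repr.arbitrary k ((Coalgebra.Repr.arbitrary k a).left i)).index,
          HopfAlgebra.antipode (R := k) (HopfAlgebra.antipode (R := k)
              ((Coalgebra.Repr.arbitrary k ((Coalgebra.Repr.arbitrary k a).left i)).right j))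
            ⊗ₜ[k] (HopfAlgebra.antipode (R := k)
                (d ((Coalgebra.Repr.arbitrary k ((Coalgebra.Repr.arbitrary k a).left i)).left j))
              * (d ((Coalgebra.Repr.arbitrary k a).right i) * h))
        = ∑ i ∈ (Coalgebra.Repr.arbitrary k a).index,
            ∑ j ∈ (Coalgebra.Repr.arbitrary k ((Coalgebra.Repr.arbitrary k a).left i)).index,
            (Coalgebra.Repr.arbitrary k ((Coalgebra.Repr.arbitrary k a).left i)).right j
              ⊗ₜ[k] (HopfAlgebra.antipode (R := k)
                  (d ((Coalgebra.Repr.arbitrary k ((Coalgebra.Repr.arbitrary k a).left i)).left j))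
                * (d ((Coalgebra.Repr.arbitrary k a).right i) * h)) := by
          refine Finset.sum_congr rfl fun i _ => Finset.sum_congr rfl fun j _ => ?_
          rw [hS2]
      _ = ∑ i ∈ (Coalgebra.Repr.arbitrary k a).index,
            ∑ j ∈ (Coalgebra.Repr.arbitrary k ((Coalgebra.Repr.arbitrary k a).left i)).index,
            (Coalgebra.Repr.arbitrary k ((Coalgebra.Repr.arbitrary k a).left i)).left j
              ⊗ₜ[k] (HopfAlgebra.antipode (R := k)
                  (d ((Coalgebra.Repr.arbitrary k ((Coalgebra.Repr.arbitrary k a).left i)).right j))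
                * (d ((Coalgebra.Repr.arbitrary k a).right i) * h)) := by
          refine Finset.sum_congr rfl fun i _ => ?_
          have hCi := LinearMap.congr_fun hC ((Coalgebra.Repr.arbitrary k a).left i)
          simp only [LinearMap.comp_apply, LinearEquiv.coe_coe] at hCi
          rw [← (Coalgebra.Repr.arbitrary k ((Coalgebra.Repr.arbitrary k a).left i)).eq] at hCi
          simp only [map_sum, TensorProduct.map_tmul, TensorProduct.comm_tmul,
            LinearMap.id_apply] at hCi
          have hLam := congrArg (LinearMap.lTensor A
            (LinearMap.mulRight k (d ((Coalgebra.Repr.arbitrary k a).right i) * h)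
              ∘ₗ (HopfAlgebra.antipode (R := k) : H →ₗ[k] H))) hCi
          simp only [map_sum, LinearMap.lTensor_tmul, LinearMap.comp_apply,
            LinearMap.mulRight_apply] at hLam
          exact hLam.symm
      _ = ∑ i ∈ (Coalgebra.Repr.arbitrary k a).index,
            ∑ j ∈ (Coalgebra.Repr.arbitrary k ((Coalgebra.Repr.arbitrary k a).right i)).index,
            (Coalgebra.Repr.arbitrary k a).left i
              ⊗ₜ[k] (HopfAlgebra.antipode (R := k)
                  (d ((Coalgebra.Repr.arbitrary k ((Coalgebra.Repr.arbitrary k a).right i)).left j))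
                * d ((Coalgebra.Repr.arbitrary k ((Coalgebra.Repr.arbitrary k a).right i)).right j) * h) := by
          rw [← key2]
          refine Finset.sum_congr rfl fun i _ => Finset.sum_congr rfl fun j _ => ?_
          rw [mul_assoc]
      _ = ∑ i ∈ (Coalgebra.Repr.arbitrary k a).index,
            (Coalgebra.counit ((Coalgebra.Repr.arbitrary k a).right i) : k)
              • ((Coalgebra.Repr.arbitrary k a).left i ⊗ₜ[k] h) := by
          refine Finset.sum_congr rfl fun i _ => ?_
          rw [← TensorProduct.tmul_sum]
          have hsum := HopfAlgebra.sum_antipode_mul_eq_algebraMap_counit (R := k)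
            (dRepr d hcm.d_comul ((Coalgebra.Repr.arbitrary k a).right i)
              (Coalgebra.Repr.arbitrary k ((Coalgebra.Repr.arbitrary k a).right i)))
          simp only [dRepr] at hsum
          rw [show (∑ j ∈ (Coalgebra.Repr.arbitrary k ((Coalgebra.Repr.arbitrary k a).right i)).index,
              HopfAlgebra.antipode (R := k)
                  (d ((Coalgebra.Repr.arbitrary k ((Coalgebra.Repr.arbitrary k a).right i)).left j))
                * d ((Coalgebra.Repr.arbitrary k ((Coalgebra.Repr.arbitrary k a).right i)).right j) * h)
            = (∑ j ∈ (Coalgebra.Repr.arbitrary k ((Coalgebra.Repr.arbitrary k a).right i)).index,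
              HopfAlgebra.antipode (R := k)
                  (d ((Coalgebra.Repr.arbitrary k ((Coalgebra.Repr.arbitrary k a).right i)).left j))
                * d ((Coalgebra.Repr.arbitrary k ((Coalgebra.Repr.arbitrary k a).right i)).right j)) * h
            from (Finset.sum_mul _ _ _).symm, hsum, hdc, ← Algebra.smul_def,
            TensorProduct.tmul_smul]
      _ = a ⊗ₜ[k] h := by
          rw [show (∑ i ∈ (Coalgebra.Repr.arbitrary k a).index,
                (Coalgebra.counit ((Coalgebra.Repr.arbitrary k a).right i) : k)
                  • ((Coalgebra.Repr.arbitrary k a).left i ⊗ₜ[k] h))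
              = (∑ i ∈ (Coalgebra.Repr.arbitrary k a).index,
                (Coalgebra.counit ((Coalgebra.Repr.arbitrary k a).right i) : k)
                  • (Coalgebra.Repr.arbitrary k a).left i) ⊗ₜ[k] h from by
                rw [TensorProduct.sum_tmul]
                exact Finset.sum_congr rfl fun i _ => (TensorProduct.smul_tmul' _ _ _).symm,
            sum_counit_smul_right]


end
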